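/- Let a₁, …, a_N > 0 with 1/2 ≤ a_j/a_k ≤ 2 for all j, k. Then every rectangle P = (0,a₁)×⋯×(0,a_n) in ℝ^n can be written as the union of closures of a finite family of open cubes {Q(x)}_{x∈X} contained in P with edges parallel to the axes, such that #X ≤ 2^n and the covering multiplicity ℵ{Q(x)} ≤ 2^n. -/
import Mathlib


/-- The open cube in `ℝ^n` (as `Fin n → ℝ`) with lower corner `z` and side `c`. -/
def openCubePi (n : ℕ) (z : Fin n → ℝ) (c : ℝ) : Set (Fin n → ℝ) :=
  {x | ∀ i, z i < x i ∧ x i < z i + c}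

lemma openCubePi_eq_pi (n : ℕ) (z : Fin n → ℝ) (c : ℝ) :
    openCubePi n z c = Set.pi Set.univ fun j => Set.Ioo (z j) (z j + c) := by
  ext x; simp [openCubePi, Set.mem_pi]

/-- a rectangle `P = (0,a₁)×⋯×(0,a_n)` with `1/2 ≤ a_j/a_k ≤ 2` for all `j,k`
coincides with the union of the closures of at most `2^n` open subcubes of `P`, whose covering
multiplicity does not exceed `2^n`. -/
theorem rectangle_union_of_cubes (n : ℕ) (a : Fin n → ℝ) (ha : ∀ j, 0 < a j)
    (hcomp : ∀ j k, a j ≤ 2 * a k) :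
    ∃ (N : ℕ) (z : Fin N → (Fin n → ℝ)) (c : Fin N → ℝ),
      N ≤ 2 ^ n ∧
      (∀ i, 0 < c i) ∧
      (∀ i, openCubePi n (z i) (c i) ⊆ {x | ∀ j, 0 < x j ∧ x j < a j}) ∧
      closure {x : Fin n → ℝ | ∀ j, 0 < x j ∧ x j < a j}
        = ⋃ i, closure (openCubePi n (z i) (c i)) ∧
      ∀ x : Fin n → ℝ, Nat.card {i : Fin N // x ∈ openCubePi n (z i) (c i)} ≤ 2 ^ n := by
  classical
  have hP : {x : Fin n → ℝ | ∀ j, 0 < x j ∧ x j < a j}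
      = Set.pi Set.univ fun j => Set.Ioo 0 (a j) := by
    ext x; simp [Set.mem_pi]
  rcases n.eq_zero_or_pos with hn | hn
  · subst hn
    refine ⟨1, fun _ j => j.elim0, fun _ => 1, by norm_num, fun _ => one_pos, ?_, ?_, ?_⟩
    · intro i x _ j; exact j.elim0
    · have h1 : {x : Fin 0 → ℝ | ∀ j, 0 < x j ∧ x j < a j} = Set.univ := by
        ext x; simp
      have h2 : openCubePi 0 (fun j => j.elim0) 1 = Set.univ := by
        ext x; simp [openCubePi]
      rw [h1]
      simp [h2, Set.iUnion_const]
    · intro x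
      have : Nat.card {i : Fin 1 // x ∈ openCubePi 0 (fun j => j.elim0) 1} ≤
          Nat.card (Fin 1) := by
        rw [Nat.card_eq_fintype_card, Nat.card_eq_fintype_card]
        exact Fintype.card_subtype_le _
      simpa using this
  · haveI : NeZero n := ⟨hn.ne'⟩
    have hne : (Finset.univ : Finset (Fin n)).Nonempty := Finset.univ_nonempty
    set c : ℝ := Finset.univ.inf' hne a with hc
    have hc_pos : 0 < c := by
      rw [hc, Finset.lt_inf'_iff]; exact fun j _ => ha j
    have hc_le : ∀ j, c ≤ a j := fun j => Finset.inf'_le _ (Finset.mem_univ j)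
    have h2c : ∀ j, a j ≤ 2 * c := by
      obtain ⟨k, -, hk⟩ := Finset.exists_mem_eq_inf' hne a
      intro j; rw [hc, hk]; exact hcomp j k
    set e := (finFunctionFinEquiv : (Fin n → Fin 2) ≃ Fin (2 ^ n)) with he
    set z : Fin (2 ^ n) → Fin n → ℝ :=
      fun k j => if e.symm k j = 1 then a j - c else 0 with hz
    have hIoo : ∀ k j, Set.Ioo (z k j) (z k j + c) ⊆ Set.Ioo 0 (a j) := by
      intro k j y hy
      by_cases hb : e.symm k j = 1
      · simp only [hz, hb, if_pos] at hy
        constructor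
        · have : (0:ℝ) ≤ a j - c := by linarith [hc_le j]
          linarith [hy.1]
        · linarith [hy.2]
      · simp only [hz, hb, if_neg, if_false] at hy
        exact ⟨hy.1, lt_of_lt_of_le hy.2 (by simpa using hc_le j)⟩
    refine ⟨2 ^ n, z, fun _ => c, le_refl _, fun _ => hc_pos, ?_, ?_, ?_⟩
    · intro k x hx j
      exact hIoo k j (hx j)
    · have hclP : closure {x : Fin n → ℝ | ∀ j, 0 < x j ∧ x j < a j}
          = Set.pi Set.univ fun j => Set.Icc 0 (a j) := by
        rw [hP, closure_pi_set]
        exact Set.pi_congr rfl fun j _ => closure_Ioo (ha j).ne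
      have hclQ : ∀ k, closure (openCubePi n (z k) c)
          = Set.pi Set.univ fun j => Set.Icc (z k j) (z k j + c) := by
        intro k
        rw [openCubePi_eq_pi, closure_pi_set]
        exact Set.pi_congr rfl fun j _ => closure_Ioo (by linarith : z k j ≠ z k j + c)
      rw [hclP]
      ext x
      simp only [Set.mem_iUnion, hclQ, Set.mem_pi, Set.mem_univ, forall_true_left,
        Set.mem_Icc, true_implies]
      constructor
      · intro hx
        refine ⟨e fun j => if x j ≤ c then 0 else 1, fun j => ?_⟩
        have hb : e.symm (e fun j => if x j ≤ c then 0 else 1) j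
            = if x j ≤ c then 0 else 1 := by rw [Equiv.symm_apply_apply]
        by_cases hxc : x j ≤ c
        · simp only [hz, hb, hxc, if_pos, if_true]
          norm_num
          exact ⟨(hx j).1, hxc⟩
        · simp only [hz, hb, hxc, if_neg, if_false, if_true]
          constructor
          · push_neg at hxc
            linarith [h2c j]
          · linarith [(hx j).2]
      · rintro ⟨k, hk⟩ j
        have := hk j
        by_cases hb : e.symm k j = 1
        · simp only [hz, hb, if_pos] at this
          constructor
          · have : (0:ℝ) ≤ a j - c := by linarith [hc_le j]
            linarith [(hk j).1, this]
          · linarith [this.2]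
        · simp only [hz, hb, if_neg, if_false] at this
          exact ⟨this.1, le_trans this.2 (by simpa using hc_le j)⟩
    · intro x
      have : Nat.card {i : Fin (2 ^ n) // x ∈ openCubePi n (z i) c} ≤
          Nat.card (Fin (2 ^ n)) := by
        rw [Nat.card_eq_fintype_card, Nat.card_eq_fintype_card]
        exact Fintype.card_subtype_le _
      simpa using this
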